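/- Let b : [γ₀, ∞) → (0, γ₀] be the unique function with λ'(b(a)) = λ'(a) for all a ≥ γ₀. Then there is a constant C ≥ 1 such that for all a ≥ γ₀: C⁻¹(a − γ₀)²/a ≤ a + b(a) − 2γ₀ ≤ C(a − γ₀)²/a, and C⁻¹(a − γ₀)²/√a ≤ −(λ''(b(a)) + λ''(a)) ≤ C(a − γ₀)²/√a. -/

import Mathlib

/-!
`lam` is the gravity–capillary dispersion relation λ(x) = √(x + x³) (with g = σ = 1);
λ', λ'' denote its derivatives on (0, ∞); `gamma0` is γ₀ = √((2√3 − 3)/3);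
b : [γ₀, ∞) → (0, γ₀] is the (unique) function satisfying λ'(b(a)) = λ'(a) for a ≥ γ₀.
-/

set_option maxHeartbeats 1000000

noncomputable section

open Real Set

/-- The dispersion relation λ(x) = √(x + x³). -/
def lam (x : ℝ) : ℝ := Real.sqrt (x + x ^ 3)

/-- γ₀ = √((2√3 − 3)/3). -/
def gamma0 : ℝ := Real.sqrt ((2 * Real.sqrt 3 - 3) / 3)


lemma lam_hasDeriv {x : ℝ} (hx : 0 < x) :
    HasDerivAt lam ((1 + 3*x^2) / (2 * Real.sqrt (x + x^3))) x := by
  have hg : 0 < x + x^3 := by positivity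
  have h1 : HasDerivAt (fun y : ℝ => y + y^3) (1 + 3*x^2) x := by
    exact ((hasDerivAt_id' x).add (hasDerivAt_pow 3 x)).congr_deriv (by norm_num)
  have h2 : HasDerivAt Real.sqrt (1/(2*Real.sqrt (x + x^3))) (x + x^3) :=
    Real.hasDerivAt_sqrt hg.ne'
  have h3 : HasDerivAt lam (1/(2*Real.sqrt (x + x^3)) * (1 + 3*x^2)) x := h2.comp x h1
  convert h3 using 1
  ring

lemma deriv_lam {x : ℝ} (hx : 0 < x) :
    deriv lam x = (1 + 3*x^2) / (2 * Real.sqrt (x + x^3)) :=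
  (lam_hasDeriv hx).deriv

lemma deriv2_lam {x : ℝ} (hx : 0 < x) :
    deriv (deriv lam) x
      = (3*x^4 + 6*x^2 - 1) / (4 * (x + x^3) * Real.sqrt (x + x^3)) := by
  have hg : 0 < x + x^3 := by positivity
  have hs : 0 < Real.sqrt (x + x^3) := Real.sqrt_pos.mpr hg
  have hev : deriv lam =ᶠ[nhds x] (fun y => (1 + 3*y^2) / (2 * Real.sqrt (y + y^3))) := by
    filter_upwards [eventually_gt_nhds hx] with y hy
    exact deriv_lam hy
  rw [hev.deriv_eq]
  have h1 : HasDerivAt (fun y : ℝ => 1 + 3*y^2) (6*x) x := by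
    have := ((hasDerivAt_pow 2 x).const_mul 3).const_add 1
    simpa using this.congr_deriv (by ring)
  have h2 : HasDerivAt (fun y : ℝ => 2 * Real.sqrt (y + y^3))
      (2 * ((1 + 3*x^2) / (2 * Real.sqrt (x + x^3)))) x := (lam_hasDeriv hx).const_mul 2
  have h3 : HasDerivAt (fun y : ℝ => (1 + 3*y^2) / (2 * Real.sqrt (y + y^3))) ((6*x * (2 * Real.sqrt (x + x^3)) - (1 + 3*x^2) * (2 * ((1 + 3*x^2) / (2 * Real.sqrt (x + x^3))))) / (2 * Real.sqrt (x + x^3))^2) x := h1.div h2 (by positivity)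
  rw [h3.deriv]
  have hsq : Real.sqrt (x + x^3) ^ 2 = x + x^3 := Real.sq_sqrt hg.le
  generalize hS : Real.sqrt (x+x^3) = s at hsq hs ⊢
  field_simp
  linear_combination (48*x^2*(1+x^2) - 4*(3*x^4+6*x^2-1)) * hsq


lemma dW2ge (p P0 : ℝ) (h1 : 1/9 ≤ p) (h2 : p ≤ P0)
    (h3 : 1547/10000 ≤ P0) (h4 : P0 ≤ 154701/1000000) :
    200*((1-p)^2*(3*p-1)^4) ≤
      78732*p^8 + (78732+78732*P0)*p^7 + (-160380-78732*P0)*p^6 + (12636-2916*P0)*p^5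
      + (34668+18468*P0)*p^4 + (-5724-2268*P0)*p^3 + (-2196-1188*P0)*p^2
      + (372+180*P0)*p + (24+12*P0) := by
  have hp9 : (0:ℝ) ≤ p - 1/9 := by linarith
  have hup : (0:ℝ) ≤ 154701/1000000 - p := by linarith
  have hl : (0:ℝ) ≤ P0 - 1547/10000 := by linarith
  have hu : (0:ℝ) ≤ 154701/1000000 - P0 := by linarith
  linarith [mul_nonneg (pow_nonneg hp9 0) (pow_nonneg hup 9),
    mul_nonneg (pow_nonneg hp9 1) (pow_nonneg hup 8),
    mul_nonneg (pow_nonneg hp9 2) (pow_nonneg hup 7),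
    mul_nonneg (pow_nonneg hp9 3) (pow_nonneg hup 6),
    mul_nonneg (pow_nonneg hp9 4) (pow_nonneg hup 5),
    mul_nonneg (pow_nonneg hp9 5) (pow_nonneg hup 4),
    mul_nonneg (pow_nonneg hp9 6) (pow_nonneg hup 3),
    mul_nonneg (pow_nonneg hp9 7) (pow_nonneg hup 2),
    mul_nonneg (pow_nonneg hp9 8) (pow_nonneg hup 1),
    mul_nonneg (pow_nonneg hp9 9) (pow_nonneg hup 0),
    mul_nonneg hl (pow_nonneg hp9 0), mul_nonneg hl (pow_nonneg hp9 1),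
    mul_nonneg hl (pow_nonneg hp9 2), mul_nonneg hl (pow_nonneg hp9 3),
    mul_nonneg hl (pow_nonneg hp9 4), mul_nonneg hl (pow_nonneg hp9 5),
    mul_nonneg hl (pow_nonneg hp9 6), mul_nonneg hl (pow_nonneg hp9 7),
    mul_nonneg hl (pow_nonneg hp9 8),
    mul_nonneg hu (pow_nonneg hp9 0), mul_nonneg hu (pow_nonneg hp9 1),
    mul_nonneg hu (pow_nonneg hp9 2), mul_nonneg hu (pow_nonneg hp9 3),
    mul_nonneg hu (pow_nonneg hp9 4), mul_nonneg hu (pow_nonneg hp9 5),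
    mul_nonneg hu (pow_nonneg hp9 6), mul_nonneg hu (pow_nonneg hp9 7),
    mul_nonneg hu (pow_nonneg hp9 8)]

lemma dW2le (p P0 : ℝ) (h1 : 1/9 ≤ p) (h2 : p ≤ P0)
    (h3 : 1547/10000 ≤ P0) (h4 : P0 ≤ 154701/1000000) :
    78732*p^8 + (78732+78732*P0)*p^7 + (-160380-78732*P0)*p^6 + (12636-2916*P0)*p^5
      + (34668+18468*P0)*p^4 + (-5724-2268*P0)*p^3 + (-2196-1188*P0)*p^2
      + (372+180*P0)*p + (24+12*P0) ≤ 600*((1-p)^2*(3*p-1)^4) := by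
  have hp9 : (0:ℝ) ≤ p - 1/9 := by linarith
  have hup : (0:ℝ) ≤ 154701/1000000 - p := by linarith
  have hl : (0:ℝ) ≤ P0 - 1547/10000 := by linarith
  have hu : (0:ℝ) ≤ 154701/1000000 - P0 := by linarith
  linarith [mul_nonneg (pow_nonneg hp9 0) (pow_nonneg hup 9),
    mul_nonneg (pow_nonneg hp9 1) (pow_nonneg hup 8),
    mul_nonneg (pow_nonneg hp9 2) (pow_nonneg hup 7),
    mul_nonneg (pow_nonneg hp9 3) (pow_nonneg hup 6),
    mul_nonneg (pow_nonneg hp9 4) (pow_nonneg hup 5),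
    mul_nonneg (pow_nonneg hp9 5) (pow_nonneg hup 4),
    mul_nonneg (pow_nonneg hp9 6) (pow_nonneg hup 3),
    mul_nonneg (pow_nonneg hp9 7) (pow_nonneg hup 2),
    mul_nonneg (pow_nonneg hp9 8) (pow_nonneg hup 1),
    mul_nonneg (pow_nonneg hp9 9) (pow_nonneg hup 0),
    mul_nonneg hl (pow_nonneg hp9 0), mul_nonneg hl (pow_nonneg hp9 1),
    mul_nonneg hl (pow_nonneg hp9 2), mul_nonneg hl (pow_nonneg hp9 3),
    mul_nonneg hl (pow_nonneg hp9 4), mul_nonneg hl (pow_nonneg hp9 5),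
    mul_nonneg hl (pow_nonneg hp9 6), mul_nonneg hl (pow_nonneg hp9 7),
    mul_nonneg hl (pow_nonneg hp9 8),
    mul_nonneg hu (pow_nonneg hp9 0), mul_nonneg hu (pow_nonneg hp9 1),
    mul_nonneg hu (pow_nonneg hp9 2), mul_nonneg hu (pow_nonneg hp9 3),
    mul_nonneg hu (pow_nonneg hp9 4), mul_nonneg hu (pow_nonneg hp9 5),
    mul_nonneg hu (pow_nonneg hp9 6), mul_nonneg hu (pow_nonneg hp9 7),
    mul_nonneg hu (pow_nonneg hp9 8)]


lemma tail1 (u v w a γ M D : ℝ) (hu : 0 ≤ u) (hv : 0 ≤ v)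
    (hγlb : 3933/10000 ≤ γ) (hγub : γ ≤ 3934/10000) (hM8 : 8 ≤ M) (hM10 : M ≤ 10)
    (hD3 : 3 ≤ D) (hD5 : D ≤ 5) (ha : a = γ + u)
    (f5 : w*D = u*(v*M)) (hwv : w = u - v) :
    0 ≤ w ∧ w*(D+u*M) = u^2*M ∧ u^2 ≤ 2*(a*w) ∧ a*w ≤ 2*u^2 := by
  have hw0 : 0 ≤ w := by
    by_contra h
    push_neg at h
    nlinarith [mul_nonneg (mul_nonneg hu hv) (by linarith : (0:ℝ) ≤ M)]
  have f10 : w*(D+u*M) = u^2*M := by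
    have : v = u - w := by linarith
    rw [this] at f5
    nlinarith [f5]
  refine ⟨hw0, f10, ?_, ?_⟩
  · have key1 : D + u*M ≤ 2*a*M := by nlinarith
    nlinarith [f10, mul_le_mul_of_nonneg_left key1 hw0]
  · have key2 : a*M ≤ 2*(D + u*M) := by
      nlinarith [mul_le_mul_of_nonneg_left hM10 (by linarith : (0:ℝ) ≤ γ),
        mul_nonneg hu (by linarith : (0:ℝ) ≤ M)]
    nlinarith [f10, mul_le_mul_of_nonneg_left key2 hw0]

lemma tail2 (u w γ M D S X E W Z : ℝ) (hu : 0 ≤ u) (hw0 : 0 ≤ w)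
    (hγlb : 3933/10000 ≤ γ) (hγub : γ ≤ 3934/10000)
    (hM8 : 8 ≤ M) (hM10 : M ≤ 10) (hD3 : 3 ≤ D) (hD5 : D ≤ 5)
    (hS23 : 2/3 ≤ S) (hSle : S ≤ 1 + u) (hSge : γ + u ≤ S)
    (hX : 0 < X) (hZ0 : 0 ≤ Z)
    (hE' : E*(X^2*M) = w*((S+2*γ)*W)) (f10 : w*(D+u*M) = u^2*M)
    (hZ : S^4*X^2 = Z) (hWge : 200*Z ≤ W) (hWle : W ≤ 600*Z) :
    7*(u^2*S^4) ≤ E ∧ E ≤ 600*(u^2*S^4) := by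
  have hW0 : 0 ≤ W := le_trans (by linarith) hWge
  have hpos : 0 < X^2*M := mul_pos (pow_pos hX 2) (by linarith)
  constructor
  · have hstep : 7*((D+u*M)*Z) ≤ (S+2*γ)*W := by
      have h1 : D + u*M ≤ 5 + 10*u := by nlinarith
      have h2 : 5 + 10*u ≤ 26*S := by nlinarith
      nlinarith [mul_le_mul_of_nonneg_right (le_trans h1 h2) hZ0,
        mul_le_mul_of_nonneg_left hWge (by linarith : (0:ℝ) ≤ S),
        mul_nonneg (by linarith : (0:ℝ) ≤ 2*γ) hW0]
    have hmain : (7*(u^2*S^4))*(X^2*M) ≤ E*(X^2*M) := by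
      have e1 : (7*(u^2*S^4))*(X^2*M) = 7*((u^2*M)*(S^4*X^2)) := by ring
      rw [e1, hZ, ← f10, hE']
      calc 7*(w*(D+u*M)*Z) = w*(7*((D+u*M)*Z)) := by ring
        _ ≤ w*((S+2*γ)*W) := mul_le_mul_of_nonneg_left hstep hw0
    exact le_of_mul_le_mul_right hmain hpos
  · have hstep : (S+2*γ)*W ≤ 600*((D+u*M)*Z) := by
      have h1 : 3*S ≤ D + u*M := by nlinarith
      have h2 : S + 2*γ ≤ 3*S := by nlinarith
      nlinarith [mul_le_mul_of_nonneg_right h1 hZ0,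
        mul_le_mul_of_nonneg_left hWle (by linarith : (0:ℝ) ≤ S + 2*γ),
        mul_le_mul_of_nonneg_right h2 hW0, mul_nonneg (by linarith : (0:ℝ) ≤ S) hZ0]
    have hmain : E*(X^2*M) ≤ (600*(u^2*S^4))*(X^2*M) := by
      have e1 : (600*(u^2*S^4))*(X^2*M) = 600*((u^2*M)*(S^4*X^2)) := by ring
      rw [e1, hZ, ← f10, hE']
      calc w*((S+2*γ)*W) ≤ w*(600*((D+u*M)*Z)) := mul_le_mul_of_nonneg_left hstep hw0
        _ = 600*(w*(D+u*M)*Z) := by ring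
    exact le_of_mul_le_mul_right hmain hpos


lemma core (a b γ P0 : ℝ) (hγ : γ^2 = P0) (hγlb : 3933/10000 ≤ γ) (hγub : γ ≤ 3934/10000)
    (hP0 : 3*P0^2 + 6*P0 - 1 = 0) (hlb : 1547/10000 ≤ P0) (hub : P0 ≤ 154701/1000000)
    (hb0 : 0 < b) (hbγ : b ≤ γ) (haγ : γ ≤ a) (hba : b < a)
    (hf1 : (a+b)^2*(9*(a*b)-1) = (1-a*b)*(3*(a*b)-1)^2) :
    (a-γ)^2 ≤ 2*(a*(a+b-2*γ)) ∧ a*(a+b-2*γ) ≤ 2*(a-γ)^2 ∧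
    7*((a-γ)^2*(a+b)^4) ≤ (-(3*b^4+6*b^2-1)*(1+3*a^2)^3 - (3*a^4+6*a^2-1)*(1+3*b^2)^3) ∧
    (-(3*b^4+6*b^2-1)*(1+3*a^2)^3 - (3*a^4+6*a^2-1)*(1+3*b^2)^3) ≤ 600*((a-γ)^2*(a+b)^4) := by
  have ha0 : 0 < a := lt_of_lt_of_le (by norm_num) (le_trans hγlb haγ)
  have h9 : 1/9 < a*b := by
    by_contra h
    push_neg at h
    nlinarith [sq_nonneg (a+b), sq_nonneg (3*(a*b)-1), mul_pos hb0 ha0]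
  have hpP0 : a*b ≤ P0 := by
    have hψ : (a-b)^2*(9*(a*b)-1)
        = -(a*b-P0)*(9*(a*b)^2+(21+9*P0)*(a*b)+6+3*P0) := by
      linear_combination hf1 + (-3*(a*b)-1)*hP0
    have hquad : 0 < 9*(a*b)^2+(21+9*P0)*(a*b)+6+3*P0 := by nlinarith
    have hL : 0 < (a-b)^2*(9*(a*b)-1) :=
      mul_pos (pow_pos (sub_pos.mpr hba) 2) (by linarith)
    by_contra h
    push_neg at h
    nlinarith [mul_pos (sub_pos.mpr h) hquad]
  have hs23 : 2/3 ≤ a+b := by nlinarith [sq_nonneg (a-b)]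
  have hsle : a+b ≤ 1+(a-γ) := by linarith
  have hsge : γ+(a-γ) ≤ a+b := by linarith
  have hM8 : 8 ≤ (9*(a*b)^2 + (9*P0-15)*(a*b) + 10 + 3*P0) := by
    nlinarith [mul_nonneg (mul_pos hb0 ha0).le (sub_nonneg.mpr hpP0)]
  have hM10 : (9*(a*b)^2 + (9*P0-15)*(a*b) + 10 + 3*P0) ≤ 10 := by
    nlinarith [mul_nonneg (by linarith : (0:ℝ) ≤ a*b - 1/9) (sub_nonneg.mpr hpP0),
      mul_pos hb0 ha0]
  have hsX : (a+b)*(9*(a*b)-1) ≤ 2/3 := by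
    by_contra h
    push_neg at h
    nlinarith [mul_nonneg (mul_pos hb0 ha0).le (sq_nonneg (3*(a*b)-1)), hf1,
      mul_lt_mul_of_pos_right h (by linarith : (0:ℝ) < a+b)]
  have hD3 : 3 ≤ ((a+b+2*γ)*(9*(a*b)-1) + γ*(9*(a*b)^2 + (9*P0-15)*(a*b) + 10 + 3*P0)) := by
    nlinarith [mul_pos (by linarith : (0:ℝ) < a+b+2*γ) (by linarith : (0:ℝ) < 9*(a*b)-1),
      mul_le_mul_of_nonneg_left hM8 (by linarith : (0:ℝ) ≤ γ)]
  have hD5 : ((a+b+2*γ)*(9*(a*b)-1) + γ*(9*(a*b)^2 + (9*P0-15)*(a*b) + 10 + 3*P0)) ≤ 5 := by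
    nlinarith [hsX, mul_le_mul_of_nonneg_left hM10 (by linarith : (0:ℝ) ≤ γ),
      mul_nonneg (by linarith : (0:ℝ) ≤ 3934/10000 - γ) (by linarith : (0:ℝ) ≤ 9*(a*b)-1),
      mul_nonneg (by linarith : (0:ℝ) ≤ γ) (by linarith : (0:ℝ) ≤ P0 - a*b)]
  have fA : ((a+b)^2-4*P0)*(9*(a*b)-1) = (P0-(a*b))*(9*(a*b)^2 + (9*P0-15)*(a*b) + 10 + 3*P0) := by
    linear_combination hf1 + (-3*(a*b)-1)*hP0
  have hw2 : (a+b)^2-4*P0 = (a+b-2*γ)*(a+b+2*γ) := by linear_combination 4*hγ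
  have hpuv : P0-(a*b) = (a-γ)*(γ-b) - γ*(a+b-2*γ) := by linear_combination -hγ
  have f5 : (a+b-2*γ)*((a+b+2*γ)*(9*(a*b)-1) + γ*(9*(a*b)^2 + (9*P0-15)*(a*b) + 10 + 3*P0)) = (a-γ)*((γ-b)*(9*(a*b)^2 + (9*P0-15)*(a*b) + 10 + 3*P0)) := by
    linear_combination fA + (9*(a*b)^2 + (9*P0-15)*(a*b) + 10 + 3*P0)*hpuv - (9*(a*b)-1)*hw2
  obtain ⟨hw0, f10, c1, c2⟩ := tail1 (a-γ) (γ-b) (a+b-2*γ) a γ (9*(a*b)^2 + (9*P0-15)*(a*b) + 10 + 3*P0) ((a+b+2*γ)*(9*(a*b)-1) + γ*(9*(a*b)^2 + (9*P0-15)*(a*b) + 10 + 3*P0))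
    (by linarith) (by linarith) hγlb hγub hM8 hM10 hD3 hD5 (by ring) f5 (by ring)
  have hE : (-(3*b^4+6*b^2-1)*(1+3*a^2)^3 - (3*a^4+6*a^2-1)*(1+3*b^2)^3)*(9*(a*b)-1)^3 = (P0 - a*b)*((78732)*(a*b)^8 + (78732 + 78732*P0)*(a*b)^7 + (-160380 + -78732*P0)*(a*b)^6 + (12636 + -2916*P0)*(a*b)^5 + (34668 + 18468*P0)*(a*b)^4 + (-5724 + -2268*P0)*(a*b)^3 + (-2196 + -1188*P0)*(a*b)^2 + (372 + 180*P0)*(a*b) + (24 + 12*P0)) := by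
    linear_combination ((8748)*a^6*b^6 + (-15309)*a^6*b^4 + (2187)*a^6*b^2 + (5832)*a^5*b^5 + (2430)*a^5*b^3 + (-486)*a^5*b + (-15309)*a^4*b^6 + (-8748)*a^4*b^4*P0^2 + (-17496)*a^4*b^4*P0 + (-7128)*a^4*b^4 + (8748)*a^4*b^2*P0^2 + (17496)*a^4*b^2*P0 + (-2268)*a^4*b^2 + (-8748)*a^4*P0^2 + (-17496)*a^4*P0 + (2943)*a^4 + (2430)*a^3*b^5 + (11664)*a^3*b^3*P0^2 + (23328)*a^3*b^3*P0 + (-2376)*a^3*b^3 + (-15552)*a^3*b*P0^2 + (-31104)*a^3*b*P0 + (5130)*a^3*b + (2187)*a^2*b^6 + (8748)*a^2*b^4*P0^2 + (17496)*a^2*b^4*P0 + (-2268)*a^2*b^4 + (-16200)*a^2*b^2*P0^2 + (-32400)*a^2*b^2*P0 + (5094)*a^2*b^2 + (26568)*a^2*P0^2 + (53136)*a^2*P0 + (-8859)*a^2 + (-486)*a*b^5 + (-15552)*a*b^3*P0^2 + (-31104)*a*b^3*P0 + (5130)*a*b^3 + (28944)*a*b*P0^2 + (57888)*a*b*P0 +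 (-9636)*a*b + (-8748)*b^4*P0^2 + (-17496)*b^4*P0 + (2943)*b^4 + (26568)*b^2*P0^2 + (53136)*b^2*P0 + (-8859)*b^2 + (-55692)*P0^2 + (-111384)*P0 + (18570))*hf1 + ((26244)*a^7*b + (58320)*a^6*b^2 + (-2916)*a^6 + (-70308)*a^5*b + (-92880)*a^4*b^2 + (5940)*a^4 + (127260)*a^3*b + (58320)*a^2*b^6 + (-92880)*a^2*b^4 + (20160)*a^2*b^2 + (-9708)*a^2 + (26244)*a*b^7 + (-70308)*a*b^5 + (127260)*a*b^3 + (102408)*a*b + (-2916)*b^6 + (5940)*b^4 + (-9708)*b^2 + (-18568))*hP0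
  have hEM : ((-(3*b^4+6*b^2-1)*(1+3*a^2)^3 - (3*a^4+6*a^2-1)*(1+3*b^2)^3)*((9*(a*b)-1)^2*(9*(a*b)^2 + (9*P0-15)*(a*b) + 10 + 3*P0)))*(9*(a*b)-1)
      = ((a+b-2*γ)*((a+b+2*γ)*((78732)*(a*b)^8 + (78732 + 78732*P0)*(a*b)^7 + (-160380 + -78732*P0)*(a*b)^6 + (12636 + -2916*P0)*(a*b)^5 + (34668 + 18468*P0)*(a*b)^4 + (-5724 + -2268*P0)*(a*b)^3 + (-2196 + -1188*P0)*(a*b)^2 + (372 + 180*P0)*(a*b) + (24 + 12*P0))))*(9*(a*b)-1) := by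
    linear_combination (9*(a*b)^2 + (9*P0-15)*(a*b) + 10 + 3*P0)*hE - ((78732)*(a*b)^8 + (78732 + 78732*P0)*(a*b)^7 + (-160380 + -78732*P0)*(a*b)^6 + (12636 + -2916*P0)*(a*b)^5 + (34668 + 18468*P0)*(a*b)^4 + (-5724 + -2268*P0)*(a*b)^3 + (-2196 + -1188*P0)*(a*b)^2 + (372 + 180*P0)*(a*b) + (24 + 12*P0))*fA + ((78732)*(a*b)^8 + (78732 + 78732*P0)*(a*b)^7 + (-160380 + -78732*P0)*(a*b)^6 + (12636 + -2916*P0)*(a*b)^5 + (34668 + 18468*P0)*(a*b)^4 + (-5724 + -2268*P0)*(a*b)^3 + (-2196 + -1188*P0)*(a*b)^2 + (372 + 180*P0)*(a*b) + (24 + 12*P0))*(9*(a*b)-1)*hw2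
  have hE' := mul_right_cancel₀ (by linarith : (9*(a*b)-1) ≠ 0) hEM
  have hZ : (a+b)^4*(9*(a*b)-1)^2 = ((1-a*b)^2*(3*(a*b)-1)^4) := by
    linear_combination ((a+b)^2*(9*(a*b)-1) + (1-a*b)*(3*(a*b)-1)^2)*hf1
  have hWge : 200*((1-a*b)^2*(3*(a*b)-1)^4) ≤ ((78732)*(a*b)^8 + (78732 + 78732*P0)*(a*b)^7 + (-160380 + -78732*P0)*(a*b)^6 + (12636 + -2916*P0)*(a*b)^5 + (34668 + 18468*P0)*(a*b)^4 + (-5724 + -2268*P0)*(a*b)^3 + (-2196 + -1188*P0)*(a*b)^2 + (372 + 180*P0)*(a*b) + (24 + 12*P0)) := by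
    have h := dW2ge (a*b) P0 (by linarith only [h9]) hpP0 hlb hub
    linarith only [h]
  have hWle : ((78732)*(a*b)^8 + (78732 + 78732*P0)*(a*b)^7 + (-160380 + -78732*P0)*(a*b)^6 + (12636 + -2916*P0)*(a*b)^5 + (34668 + 18468*P0)*(a*b)^4 + (-5724 + -2268*P0)*(a*b)^3 + (-2196 + -1188*P0)*(a*b)^2 + (372 + 180*P0)*(a*b) + (24 + 12*P0)) ≤ 600*((1-a*b)^2*(3*(a*b)-1)^4) := by
    have h := dW2le (a*b) P0 (by linarith only [h9]) hpP0 hlb hub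
    linarith only [h]
  obtain ⟨c3, c4⟩ := tail2 (a-γ) (a+b-2*γ) γ (9*(a*b)^2 + (9*P0-15)*(a*b) + 10 + 3*P0) ((a+b+2*γ)*(9*(a*b)-1) + γ*(9*(a*b)^2 + (9*P0-15)*(a*b) + 10 + 3*P0)) (a+b) (9*(a*b)-1)
    (-(3*b^4+6*b^2-1)*(1+3*a^2)^3 - (3*a^4+6*a^2-1)*(1+3*b^2)^3) ((78732)*(a*b)^8 + (78732 + 78732*P0)*(a*b)^7 + (-160380 + -78732*P0)*(a*b)^6 + (12636 + -2916*P0)*(a*b)^5 + (34668 + 18468*P0)*(a*b)^4 + (-5724 + -2268*P0)*(a*b)^3 + (-2196 + -1188*P0)*(a*b)^2 + (372 + 180*P0)*(a*b) + (24 + 12*P0)) ((1-a*b)^2*(3*(a*b)-1)^4) (by linarith only [haγ]) hw0 hγlb hγub hM8 hM10 hD3 hD5 hs23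
    (by linarith only [hsle]) hsge (by linarith only [h9]) (by positivity) hE' f10 hZ hWge hWle
  exact ⟨c1, c2, c3, c4⟩

-- numeric facts about gamma0
lemma gfacts : gamma0^2 = (2 * Real.sqrt 3 - 3) / 3 ∧
    3933/10000 ≤ gamma0 ∧ gamma0 ≤ 3934/10000 ∧
    3*((2 * Real.sqrt 3 - 3) / 3)^2 + 6*((2 * Real.sqrt 3 - 3) / 3) - 1 = 0 ∧
    1547/10000 ≤ (2 * Real.sqrt 3 - 3) / 3 ∧ (2 * Real.sqrt 3 - 3) / 3 ≤ 154701/1000000 := by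
  have hs3 : Real.sqrt 3 ^ 2 = 3 := Real.sq_sqrt (by norm_num)
  have hs3nn : 0 ≤ Real.sqrt 3 := Real.sqrt_nonneg 3
  have h3l : (173205/100000:ℝ) ≤ Real.sqrt 3 := by nlinarith
  have h3u : Real.sqrt 3 ≤ 17320509/10000000 := by nlinarith
  have hlb : (1547/10000:ℝ) ≤ (2 * Real.sqrt 3 - 3) / 3 := by linarith
  have hub : (2 * Real.sqrt 3 - 3) / 3 ≤ 154701/1000000 := by linarith
  have hγq : gamma0^2 = (2 * Real.sqrt 3 - 3) / 3 := by
    rw [gamma0]; exact Real.sq_sqrt (by linarith)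
  have hγnn : 0 ≤ gamma0 := Real.sqrt_nonneg _
  refine ⟨hγq, by nlinarith, by nlinarith, by linear_combination (4/3)*hs3, hlb, hub⟩

/-- There is C ≥ 1 such that for all a ≥ γ₀:
C⁻¹(a − γ₀)²/a ≤ a + b(a) − 2γ₀ ≤ C(a − γ₀)²/a and
C⁻¹(a − γ₀)²/√a ≤ −(λ''(b(a)) + λ''(a)) ≤ C(a − γ₀)²/√a. -/
theorem stmt6 (b : ℝ → ℝ)
    (hb : ∀ a : ℝ, gamma0 ≤ a → b a ∈ Ioc 0 gamma0 ∧ deriv lam (b a) = deriv lam a) :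
    ∃ C : ℝ, 1 ≤ C ∧ ∀ a : ℝ, gamma0 ≤ a →
      (C⁻¹ * (a - gamma0) ^ 2 / a ≤ a + b a - 2 * gamma0 ∧
        a + b a - 2 * gamma0 ≤ C * (a - gamma0) ^ 2 / a) ∧
      (C⁻¹ * (a - gamma0) ^ 2 / Real.sqrt a ≤
          -(deriv (deriv lam) (b a) + deriv (deriv lam) a) ∧
        -(deriv (deriv lam) (b a) + deriv (deriv lam) a) ≤
          C * (a - gamma0) ^ 2 / Real.sqrt a) := by
  obtain ⟨hγq, hγlb, hγub, hP0eq, hP0lb, hP0ub⟩ := gfacts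
  refine ⟨10000, by norm_num, ?_⟩
  intro a ha
  obtain ⟨⟨hb0, hbγ⟩, hder⟩ := hb a ha
  have hγpos : (0:ℝ) < gamma0 := lt_of_lt_of_le (by norm_num) hγlb
  have ha0 : (0:ℝ) < a := lt_of_lt_of_le hγpos ha
  have hqγ0 : 3*gamma0^4 + 6*gamma0^2 - 1 = 0 := by
    linear_combination (3*gamma0^2 + 3*((2 * Real.sqrt 3 - 3) / 3) + 6)*hγq + hP0eq
  have hsa : 0 < Real.sqrt a := Real.sqrt_pos.mpr ha0
  rcases eq_or_lt_of_le (le_trans hbγ ha) with heq | hba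
  · -- b a = a, hence a = gamma0
    have haγ : a = gamma0 := le_antisymm (heq ▸ hbγ) ha
    have hba' : b a = gamma0 := heq.symm ▸ haγ
    have hdd : deriv (deriv lam) gamma0 = 0 := by
      rw [deriv2_lam hγpos, show 3*gamma0^4 + 6*gamma0^2 - 1 = 0 from hqγ0, zero_div]
    rw [heq, haγ, hdd]
    norm_num
    exact ⟨by linarith, by linarith⟩
  · -- main case  b a < a
    set c := b a with hc
    have hgb : Real.sqrt (c + c^3) ^ 2 = c + c^3 := Real.sq_sqrt (by positivity)
    have hga : Real.sqrt (a + a^3) ^ 2 = a + a^3 := Real.sq_sqrt (by positivity)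
    have hσb : 0 < Real.sqrt (c + c^3) := Real.sqrt_pos.mpr (by positivity)
    have hσa : 0 < Real.sqrt (a + a^3) := Real.sqrt_pos.mpr (by positivity)
    rw [deriv_lam hb0, deriv_lam ha0] at hder
    have hrel : (1+3*c^2) * Real.sqrt (a + a^3) = (1+3*a^2) * Real.sqrt (c + c^3) := by
      rw [div_eq_div_iff (by positivity) (by positivity)] at hder
      linarith
    have hP : (1+3*c^2)^2*(a+a^3) = (1+3*a^2)^2*(c+c^3) := by
      have h2 := congrArg (fun z : ℝ => z^2) hrel
      simp only [mul_pow] at h2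
      linear_combination h2 - (1+3*c^2)^2*hga + (1+3*a^2)^2*hgb
    have hf1 : (a+c)^2*(9*(a*c)-1) = (1-a*c)*(3*(a*c)-1)^2 := by
      have hQ0 : (a-c)*((a+c)^2*(9*(a*c)-1) - (1-a*c)*(3*(a*c)-1)^2) = 0 := by
        linear_combination -hP
      rcases mul_eq_zero.mp hQ0 with h | h
      · exact absurd (by linarith : a = c) (by intro hh; exact absurd hh.symm (ne_of_lt hba))
      · linarith [sub_eq_zero.mp h]
    obtain ⟨c1, c2, c3, c4⟩ := core a c gamma0 ((2 * Real.sqrt 3 - 3) / 3) hγq hγlb hγub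
      hP0eq hP0lb hP0ub hb0 hbγ ha hba hf1
    constructor
    · constructor
      · rw [div_le_iff₀ ha0]
        linarith only [c1, sq_nonneg (a-gamma0)]
      · rw [le_div_iff₀ ha0]
        linarith only [c2, sq_nonneg (a-gamma0)]
    · -- second derivative estimates
      have e1 : deriv (deriv lam) a * (4*(Real.sqrt (a+a^3))^3) = 3*a^4+6*a^2-1 := by
        rw [deriv2_lam ha0, div_mul_eq_mul_div, div_eq_iff (by positivity : (4*(a+a^3)*Real.sqrt (a+a^3)) ≠ 0)]
        linear_combination (4*(3*a^4+6*a^2-1)*Real.sqrt (a+a^3))*hga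
      have e2 : deriv (deriv lam) c * (4*(Real.sqrt (c+c^3))^3) = 3*c^4+6*c^2-1 := by
        rw [deriv2_lam hb0, div_mul_eq_mul_div, div_eq_iff (by positivity : (4*(c+c^3)*Real.sqrt (c+c^3)) ≠ 0)]
        linear_combination (4*(3*c^4+6*c^2-1)*Real.sqrt (c+c^3))*hgb
      have hcube : (1+3*c^2)^3*(Real.sqrt (a+a^3))^3
          = (1+3*a^2)^3*(Real.sqrt (c+c^3))^3 := by
        linear_combination (((1+3*c^2)*Real.sqrt (a+a^3))^2
          + ((1+3*c^2)*Real.sqrt (a+a^3))*((1+3*a^2)*Real.sqrt (c+c^3))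
          + ((1+3*a^2)*Real.sqrt (c+c^3))^2)*hrel
      have hTE : (-(deriv (deriv lam) c + deriv (deriv lam) a))
          * (4*(Real.sqrt (a+a^3))^3*(1+3*c^2)^3) = (-(3*c^4+6*c^2-1)*(1+3*a^2)^3 - (3*a^4+6*a^2-1)*(1+3*c^2)^3) := by
        linear_combination (-(4:ℝ)*(deriv (deriv lam) c))*hcube
          - (1+3*a^2)^3*e2 - (1+3*c^2)^3*e1
      have hsa2 : Real.sqrt a ^ 2 = a := Real.sq_sqrt ha0.le
      have hσeq : Real.sqrt (a+a^3) = Real.sqrt a * Real.sqrt (1+a^2) := by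
        rw [show a+a^3 = a*(1+a^2) by ring, Real.sqrt_mul ha0.le]
      have hs1p : 0 < Real.sqrt (1+a^2) := Real.sqrt_pos.mpr (by positivity)
      have hs1sq : Real.sqrt (1+a^2) ^ 2 = 1+a^2 := Real.sq_sqrt (by positivity)
      have hs1l : a ≤ Real.sqrt (1+a^2) := by nlinarith only [hs1sq, hs1p, ha0]
      have hs1u : Real.sqrt (1+a^2) ≤ 1+a := by nlinarith only [hs1sq, hs1p, ha0]
      have hcb1 : a^4 * Real.sqrt a ≤ (Real.sqrt (a+a^3))^3 := by
        rw [hσeq, mul_pow]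
        have h1 : Real.sqrt a ^ 3 = a * Real.sqrt a := by rw [pow_succ, hsa2]
        have h2 : a^3 ≤ Real.sqrt (1+a^2) ^ 3 := pow_le_pow_left₀ ha0.le hs1l 3
        rw [h1]
        calc a^4 * Real.sqrt a = (a*Real.sqrt a) * a^3 := by ring
          _ ≤ (a*Real.sqrt a) * Real.sqrt (1+a^2)^3 :=
              mul_le_mul_of_nonneg_left h2 (by positivity)
      have hcb2 : (Real.sqrt (a+a^3))^3 ≤ (a*(1+a)^3) * Real.sqrt a := by
        rw [hσeq, mul_pow]
        have h1 : Real.sqrt a ^ 3 = a * Real.sqrt a := by rw [pow_succ, hsa2]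
        have h2 : Real.sqrt (1+a^2) ^ 3 ≤ (1+a)^3 := pow_le_pow_left₀ hs1p.le hs1u 3
        rw [h1]
        calc (a*Real.sqrt a) * Real.sqrt (1+a^2)^3 ≤ (a*Real.sqrt a) * (1+a)^3 :=
              mul_le_mul_of_nonneg_left h2 (by positivity)
          _ = (a*(1+a)^3) * Real.sqrt a := by ring
      have ha' : 3933/10000 ≤ a := le_trans hγlb ha
      have hY1 : 1 ≤ (1+3*c^2)^3 := by
        linarith only [pow_nonneg hb0.le 2, pow_nonneg hb0.le 4, pow_nonneg hb0.le 6]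
      have hcc : c^2 ≤ 1548/10000 := by
        linarith only [mul_self_le_mul_self hb0.le hbγ,
          mul_self_le_mul_self (le_trans (by norm_num : (0:ℝ) ≤ 3933/10000) hγlb) hγub]
      have hY2 : (1+3*c^2)^3 ≤ 16/5 := by
        calc (1+3*c^2)^3 ≤ (14644/10000)^3 :=
              pow_le_pow_left₀ (by positivity) (by linarith) 3
          _ ≤ 16/5 := by norm_num
      have haa : a*(1+a)^3 ≤ 50*a^4 := by
        have hq : 0 ≤ 49*a^3 - 3*a^2 - 3*a - 1 := by
          nlinarith only [ha', mul_nonneg (sub_nonneg.mpr ha') (sub_nonneg.mpr ha'),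
            mul_nonneg (mul_nonneg (sub_nonneg.mpr ha') (sub_nonneg.mpr ha')) (sub_nonneg.mpr ha')]
        linarith only [mul_nonneg ha0.le hq]
      have hsa4 : a^4 ≤ (a+c)^4 := pow_le_pow_left₀ ha0.le (by linarith) 4
      have hs2a : (a+c)^4 ≤ 16*a^4 := by
        have h := pow_le_pow_left₀ (by linarith : (0:ℝ) ≤ a+c) (by linarith : a+c ≤ 2*a) 4
        calc (a+c)^4 ≤ (2*a)^4 := h
          _ = 16*a^4 := by ring
      have hκ : (0:ℝ) < 4*(Real.sqrt (a+a^3))^3*(1+3*c^2)^3 := by positivity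
      have hσ3p : (0:ℝ) < (Real.sqrt (a+a^3))^3 := pow_pos hσa 3
      -- upper bound for 4σ³Y³ and lower bound
      have mUP : 4*(Real.sqrt (a+a^3))^3*(1+3*c^2)^3 ≤ 640*(a^4*Real.sqrt a) := by
        have k1 : (Real.sqrt (a+a^3))^3*(1+3*c^2)^3 ≤ ((a*(1+a)^3)*Real.sqrt a)*(16/5) :=
          mul_le_mul hcb2 hY2 (by positivity) (by positivity)
        have k2 : (a*(1+a)^3)*Real.sqrt a ≤ (50*a^4)*Real.sqrt a :=
          mul_le_mul_of_nonneg_right haa hsa.le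
        linarith only [k1, k2]
      have mLO : a^4*Real.sqrt a ≤ (Real.sqrt (a+a^3))^3*(1+3*c^2)^3 := by
        have k1 : (Real.sqrt (a+a^3))^3*1 ≤ (Real.sqrt (a+a^3))^3*(1+3*c^2)^3 :=
          mul_le_mul_of_nonneg_left hY1 hσ3p.le
        linarith only [hcb1, k1]
      have m2 : a^4*Real.sqrt a ≤ (a+c)^4*Real.sqrt a :=
        mul_le_mul_of_nonneg_right hsa4 hsa.le
      have m3 : (a+c)^4*Real.sqrt a ≤ 16*(a^4*Real.sqrt a) := by
        have h16 := mul_le_mul_of_nonneg_right hs2a hsa.le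
        linarith only [h16]
      have hunn : (0:ℝ) ≤ (a-gamma0)^2 := sq_nonneg _
      constructor
      · rw [div_le_iff₀ hsa]
        have hmain : ((10000:ℝ)⁻¹ * (a-gamma0)^2) * (4*(Real.sqrt (a+a^3))^3*(1+3*c^2)^3)
            ≤ ((-(deriv (deriv lam) c + deriv (deriv lam) a)) * Real.sqrt a)
              * (4*(Real.sqrt (a+a^3))^3*(1+3*c^2)^3) := by
          have hR : ((-(deriv (deriv lam) c + deriv (deriv lam) a)) * Real.sqrt a)
              * (4*(Real.sqrt (a+a^3))^3*(1+3*c^2)^3) = ((-(3*c^4+6*c^2-1)*(1+3*a^2)^3 - (3*a^4+6*a^2-1)*(1+3*c^2)^3)) * Real.sqrt a := by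
            linear_combination Real.sqrt a * hTE
          rw [hR]
          have hEt7 : 7*((a-gamma0)^2*(a+c)^4) * Real.sqrt a ≤ ((-(3*c^4+6*c^2-1)*(1+3*a^2)^3 - (3*a^4+6*a^2-1)*(1+3*c^2)^3)) * Real.sqrt a :=
            mul_le_mul_of_nonneg_right c3 hsa.le
          have n1 := mul_le_mul_of_nonneg_left mUP hunn
          have n2 := mul_le_mul_of_nonneg_left m2 hunn
          have hinv : ((10000:ℝ)⁻¹ * (a-gamma0)^2) * (4*(Real.sqrt (a+a^3))^3*(1+3*c^2)^3)
              = (1/10000) * ((a-gamma0)^2 * (4*(Real.sqrt (a+a^3))^3*(1+3*c^2)^3)) := by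
            ring_nf
          rw [hinv]
          linarith only [n1, n2, hEt7, mul_nonneg hunn (mul_nonneg (pow_nonneg ha0.le 4) hsa.le)]
        exact le_of_mul_le_mul_right hmain hκ
      · rw [le_div_iff₀ hsa]
        have hmain : ((-(deriv (deriv lam) c + deriv (deriv lam) a)) * Real.sqrt a)
              * (4*(Real.sqrt (a+a^3))^3*(1+3*c^2)^3)
            ≤ (10000 * (a-gamma0)^2) * (4*(Real.sqrt (a+a^3))^3*(1+3*c^2)^3) := by
          have hR : ((-(deriv (deriv lam) c + deriv (deriv lam) a)) * Real.sqrt a)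
              * (4*(Real.sqrt (a+a^3))^3*(1+3*c^2)^3) = ((-(3*c^4+6*c^2-1)*(1+3*a^2)^3 - (3*a^4+6*a^2-1)*(1+3*c^2)^3)) * Real.sqrt a := by
            linear_combination Real.sqrt a * hTE
          rw [hR]
          have hEt6 : ((-(3*c^4+6*c^2-1)*(1+3*a^2)^3 - (3*a^4+6*a^2-1)*(1+3*c^2)^3)) * Real.sqrt a ≤ 600*((a-gamma0)^2*(a+c)^4) * Real.sqrt a :=
            mul_le_mul_of_nonneg_right c4 hsa.le
          have n1 := mul_le_mul_of_nonneg_left mLO hunn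
          have n2 := mul_le_mul_of_nonneg_left m3 hunn
          linarith only [n1, n2, hEt6, mul_nonneg hunn (mul_nonneg (pow_nonneg ha0.le 4) hsa.le)]
        exact le_of_mul_le_mul_right hmain hκ

end
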